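/- For every n ≥ 2, the holomorph Hol(C_{3^n} × C_3) has a normal subgroup N isomorphic to the elementary abelian group (C_3)^4 such that the quotient Hol(C_{3^n} × C_3)/N is isomorphic to Hol(C_3) × Hol(C_{3^{n-1}}). -/

import Mathlib

def Hol (G : Type*) [Group G] :=
  SemidirectProduct G (MulAut G) (MonoidHom.id (MulAut G))

instance (G : Type*) [Group G] : Group (Hol G) :=
  inferInstanceAs (Group (SemidirectProduct G (MulAut G) (MonoidHom.id (MulAut G))))

namespace HolAux

open Multiplicative

/-! ### Automorphisms of cyclic groups as units -/

section Cyclic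

variable {m : ℕ}

/-- multiplication by a unit as an automorphism of `Multiplicative (ZMod m)`. -/
def unitToAut (u : (ZMod m)ˣ) : MulAut (Multiplicative (ZMod m)) where
  toFun z := ofAdd ((u : ZMod m) * toAdd z)
  invFun z := ofAdd (((u⁻¹ : (ZMod m)ˣ) : ZMod m) * toAdd z)
  left_inv z := by simp [← mul_assoc]
  right_inv z := by simp [← mul_assoc]
  map_mul' z w := by simp [mul_add]

@[simp] lemma unitToAut_apply (u : (ZMod m)ˣ) (z : Multiplicative (ZMod m)) :
    unitToAut u z = ofAdd ((u : ZMod m) * toAdd z) := rfl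

lemma unitToAut_mul (u v : (ZMod m)ˣ) :
    unitToAut (u * v) = unitToAut u * unitToAut v := by
  apply MulEquiv.ext
  intro z
  simp [MulAut.mul_apply, mul_assoc]

lemma unitToAut_one : unitToAut (1 : (ZMod m)ˣ) = 1 := by
  apply MulEquiv.ext; intro z; simp

lemma unitToAut_congr {u v : (ZMod m)ˣ} (h : (u : ZMod m) = v) :
    unitToAut u = unitToAut v := by
  congr 1; exact Units.ext h

lemma aut_eq_unitToAut [NeZero m] (A : MulAut (Multiplicative (ZMod m))) :
    ∃ u : (ZMod m)ˣ, A = unitToAut u := by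
  have key : ∀ (B : MulAut (Multiplicative (ZMod m))) (z : ZMod m),
      toAdd (B (ofAdd z)) = z * toAdd (B (ofAdd (1 : ZMod m))) := by
    intro B z
    have hz : z = z.val • (1 : ZMod m) := by
      simp [nsmul_eq_mul, ZMod.natCast_val, ZMod.cast_id]
    calc toAdd (B (ofAdd z)) = toAdd (B ((ofAdd (1 : ZMod m)) ^ z.val)) := by
          rw [← ofAdd_nsmul, ← hz]
      _ = z.val • toAdd (B (ofAdd (1 : ZMod m))) := by rw [map_pow, toAdd_pow]
      _ = z * toAdd (B (ofAdd (1 : ZMod m))) := by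
          simp [nsmul_eq_mul, ZMod.natCast_val, ZMod.cast_id]
  set a := toAdd (A (ofAdd (1 : ZMod m))) with ha
  set b := toAdd (A⁻¹ (ofAdd (1 : ZMod m))) with hb
  have hab : b * a = 1 := by
    have := key A b
    have h2 : A (ofAdd b) = ofAdd (1 : ZMod m) := by
      show A (ofAdd (toAdd (A⁻¹ (ofAdd (1:ZMod m))))) = _
      simp
    rw [h2] at this
    simpa using this.symm
  have hu : IsUnit a := IsUnit.of_mul_eq_one (a := a) b (by rw [mul_comm]; exact hab)
  refine ⟨hu.unit, ?_⟩
  apply MulEquiv.ext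
  intro z
  have := key A (toAdd z)
  simp only [ofAdd_toAdd] at this
  apply_fun (toAdd) using (fun x y h => by simpa using congrArg ofAdd h)
  rw [this]
  simp [mul_comm, IsUnit.unit_spec]
  rfl

end Cyclic


/-! ### Arithmetic in `ZMod (3^(k+1))` -/

section Arith

variable (k : ℕ)

local notation "R" => ZMod (3^(k+1))
local notation "S" => ZMod (3^k)
local notation "T" => ZMod 3

/-- The element `3^k` of `ZMod (3^(k+1))`. -/
def pR : R := ((3^k : ℕ) : R)

/-- "multiplication by `3^k`" map `ZMod 3 → ZMod (3^(k+1))`. -/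
def m3 (t : T) : R := t.val • pR k

/-- "division by `3^k`" map `ZMod (3^(k+1)) → ZMod 3`. -/
def div3 (u : R) : T := ((u.val / 3^k : ℕ) : T)

/-- cast `ZMod (3^(k+1)) → ZMod (3^k)`. -/
def castS : R →+* S := ZMod.castHom (pow_dvd_pow 3 (Nat.le_succ k)) S

/-- cast `ZMod (3^(k+1)) → ZMod 3`. -/
def castT : R →+* T := ZMod.castHom (dvd_pow_self 3 (Nat.succ_ne_zero k)) T

lemma castT_apply (u : R) : castT k u = ((u.val : ℕ) : T) := by
  rw [castT, ZMod.castHom_apply, ← ZMod.natCast_val]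

lemma castS_apply (u : R) : castS k u = ((u.val : ℕ) : S) := by
  rw [castS, ZMod.castHom_apply, ← ZMod.natCast_val]

lemma three_smul_pR : 3 • pR k = 0 := by
  have : (3 • pR k) = ((3^(k+1) : ℕ) : R) := by
    rw [pR, ← Nat.cast_smul_eq_nsmul R, smul_eq_mul]
    push_cast [pow_succ]
    ring
  rw [this, ZMod.natCast_self]

lemma nsmul_pR_mod (a : ℕ) : a • pR k = (a % 3) • pR k := by
  have h : a = a % 3 + (a / 3) * 3 := by omega
  calc a • pR k = (a % 3 + (a / 3) * 3) • pR k := by rw [← h]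
    _ = (a % 3) • pR k + (a / 3) • (3 • pR k) := by rw [add_nsmul, mul_smul]
    _ = (a % 3) • pR k := by rw [three_smul_pR, smul_zero, add_zero]

lemma m3_add (s t : T) : m3 k (s + t) = m3 k s + m3 k t := by
  rw [m3, m3, m3, ← add_nsmul, ZMod.val_add, ← nsmul_pR_mod]

lemma m3_zero : m3 k (0 : T) = 0 := by simp [m3]

/-- `m3` as an additive monoid hom. -/
def m3Hom : T →+ R := AddMonoidHom.mk' (m3 k) (m3_add k)

lemma m3_nsmul (a : ℕ) (t : T) : a • m3 k t = m3 k ((a : T) * t) := by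
  have h1 : a • m3 k t = m3Hom k (a • t) := (map_nsmul (m3Hom k) a t).symm
  rw [h1, nsmul_eq_mul]
  rfl

lemma pR_mul_pR (hk : 1 ≤ k) : pR k * pR k = 0 := by
  rw [pR, ← Nat.cast_mul, ← pow_add, ZMod.natCast_eq_zero_iff]
  exact pow_dvd_pow 3 (by omega)

lemma m3_mul_m3 (hk : 1 ≤ k) (s t : T) : m3 k s * m3 k t = 0 := by
  rw [m3, m3, smul_mul_smul_comm, pR_mul_pR k hk]
  simp

lemma m3_eq_cast (t : T) : m3 k t = ((t.val * 3^k : ℕ) : R) := by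
  rw [m3, pR, Nat.cast_mul, ← nsmul_eq_mul]

lemma val_m3 (t : T) : (m3 k t).val = t.val * 3^k := by
  rw [m3_eq_cast, ZMod.val_natCast, Nat.mod_eq_of_lt]
  have h1 : t.val < 3 := t.val_lt
  calc t.val * 3^k < 3 * 3^k := by
        exact (Nat.mul_lt_mul_right (by positivity)).mpr h1
    _ = 3^(k+1) := by rw [pow_succ, mul_comm]

lemma div3_m3 (t : T) : div3 k (m3 k t) = t := by
  rw [div3, val_m3, Nat.mul_div_cancel _ (Nat.pow_pos (by norm_num)),
    ZMod.natCast_zmod_val]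

lemma dvd_val_of_three_smul (u : R) (h : 3 • u = 0) : 3^k ∣ u.val := by
  have h3 : ((3 * u.val : ℕ) : R) = 0 := by
    have h4 : ((3 * u.val : ℕ) : R) = 3 • u := by
      push_cast [ZMod.natCast_zmod_val, nsmul_eq_mul]
      ring
    rw [h4, h]
  rw [ZMod.natCast_eq_zero_iff] at h3
  obtain ⟨c, hc⟩ := h3
  refine ⟨c, ?_⟩
  have h5 : 3 * u.val = 3 * (3^k * c) := by rw [hc, pow_succ]; ring
  exact Nat.eq_of_mul_eq_mul_left (by norm_num) h5

lemma m3_div3 (u : R) (h : 3^k ∣ u.val) : m3 k (div3 k u) = u := by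
  obtain ⟨q, hq⟩ := h
  rw [mul_comm] at hq
  have hqlt : q < 3 := by
    have h1 := u.val_lt
    rw [hq] at h1
    have h2 : 3^k * 3 = 3^(k+1) := by rw [pow_succ]
    by_contra hc
    push_neg at hc
    have h3 : 3^k * 3 ≤ 3^k * q := Nat.mul_le_mul_left _ hc
    have h4 : q * 3^k = 3^k * q := by ring
    rw [h4] at h1
    omega
  have hdiv : u.val / 3 ^ k = q := by
    rw [hq]
    exact Nat.mul_div_cancel q (by positivity)
  rw [m3_eq_cast, div3, hdiv, ZMod.val_natCast, Nat.mod_eq_of_lt hqlt, ← hq,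
    ZMod.natCast_zmod_val]

lemma castS_m3 (t : T) : castS k (m3 k t) = 0 := by
  rw [m3_eq_cast]
  have : castS k ((t.val * 3^k : ℕ) : R) = ((t.val * 3^k : ℕ) : S) := map_natCast _ _
  rw [this, ZMod.natCast_eq_zero_iff]
  exact Dvd.dvd.mul_left dvd_rfl _

lemma castT_m3 (hk : 1 ≤ k) (t : T) : castT k (m3 k t) = 0 := by
  rw [m3_eq_cast]
  have h1 : castT k ((t.val * 3^k : ℕ) : R) = ((t.val * 3^k : ℕ) : T) := map_natCast _ _
  rw [h1, ZMod.natCast_eq_zero_iff]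
  exact Dvd.dvd.mul_left (dvd_pow_self 3 (by omega)) _

lemma mul_pR (x : R) : x * pR k = m3 k (castT k x) := by
  conv_lhs => rw [← ZMod.natCast_zmod_val x]
  rw [← nsmul_eq_mul, nsmul_pR_mod]
  rw [m3, castT_apply, ZMod.val_natCast]

lemma mul_m3 (x : R) (t : T) : x * m3 k t = m3 k (castT k x * t) := by
  rw [m3, mul_smul_comm, mul_pR, m3_nsmul, ZMod.natCast_zmod_val, mul_comm t]

lemma val_cast_T (t : T) : ((t.val : ℕ) : T) = t := ZMod.natCast_zmod_val t

lemma unit_sq (u : T) (h : IsUnit u) : u * u = 1 := by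
  revert h; revert u; decide

lemma castT_eq_one (x : R) (hk : 1 ≤ k) (h : castS k x = 1) : castT k x = 1 := by
  have h3k : 1 < 3^k := by
    calc 1 < 3 := by norm_num
      _ ≤ 3^k := Nat.le_self_pow (by omega) 3
  haveI : Fact (1 < 3^k) := ⟨h3k⟩
  have hval : x.val % 3^k = 1 := by
    rw [castS_apply] at h
    have := congrArg ZMod.val h
    rwa [ZMod.val_natCast, ZMod.val_one] at this
  have hx3 : x.val % 3 = 1 := by
    have h9 : x.val % 3^k % 3 = x.val % 3 :=
      Nat.mod_mod_of_dvd _ (dvd_pow_self 3 (by omega))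
    omega
  rw [castT_apply, ← ZMod.natCast_mod, hx3]
  norm_num


/-! ### Automorphism builders -/

local notation "G" => Multiplicative (ZMod (3^(k+1)) × ZMod 3)

/-- matrix-type endomorphism of `R × T`. -/
def Mfun (a : R) (t c d : T) : R × T → R × T :=
  fun p => (a * p.1 + m3 k (t * p.2), c * castT k p.1 + d * p.2)

lemma m3_mul (t : T) (x : R) : m3 k t * x = m3 k (castT k x * t) := by
  rw [mul_comm, mul_m3]

lemma Mfun_comp (hk : 1 ≤ k) (a a' : R) (t c d t' c' d' : T) (p : R × T) :
    Mfun k a t c d (Mfun k a' t' c' d' p)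
      = Mfun k (a * a' + m3 k (t * c')) (castT k a * t' + t * d')
          (c * castT k a' + d * c') (d * d') p := by
  obtain ⟨x, y⟩ := p
  unfold Mfun
  apply Prod.ext
  · show a * (a' * x + m3 k (t' * y)) + m3 k (t * (c' * castT k x + d' * y))
      = (a * a' + m3 k (t * c')) * x + m3 k ((castT k a * t' + t * d') * y)
    rw [mul_add a, mul_m3, mul_add t, m3_add, add_mul, m3_mul, add_mul, m3_add]
    have h1 : castT k x * (t * c') = t * (c' * castT k x) := by ring
    have h2 : castT k a * t' * y = castT k a * (t' * y) := by ring
    have h3 : t * d' * y = t * (d' * y) := by ring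
    rw [h1, h2, h3]
    ring
  · show c * castT k (a' * x + m3 k (t' * y)) + d * (c' * castT k x + d' * y)
      = (c * castT k a' + d * c') * castT k x + d * d' * y
    rw [map_add, map_mul, castT_m3 k hk]
    ring

lemma Mfun_id (p : R × T) : Mfun k 1 0 0 1 p = p := by
  obtain ⟨x, y⟩ := p
  unfold Mfun
  simp [m3_zero]

lemma Mfun_add (a : R) (t c d : T) (p q : R × T) :
    Mfun k a t c d (p + q) = Mfun k a t c d p + Mfun k a t c d q := by
  obtain ⟨x, y⟩ := p; obtain ⟨x', y'⟩ := q
  unfold Mfun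
  apply Prod.ext
  · show a * (x + x') + m3 k (t * (y + y'))
      = (a * x + m3 k (t * y)) + (a * x' + m3 k (t * y'))
    rw [mul_add a, mul_add t, m3_add]
    ring
  · show c * castT k (x + x') + d * (y + y')
      = (c * castT k x + d * y) + (c * castT k x' + d * y')
    rw [map_add]
    ring

/-- the subfamily of automorphisms with `c = 0`. -/
def Mσ (hk : 1 ≤ k) (a : (ZMod (3^(k+1)))ˣ) (t : T) (d : (ZMod 3)ˣ) : MulAut G where
  toFun z := ofAdd (Mfun k a t 0 d (toAdd z))
  invFun z := ofAdd (Mfun k (↑a⁻¹) (-(castT k ↑a⁻¹ * t * ↑d⁻¹)) 0 (↑d⁻¹) (toAdd z))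
  left_inv z := by
    simp only [toAdd_ofAdd, Mfun_comp k hk]
    have e1 : (↑a⁻¹ : R) * ↑a + m3 k (-(castT k ↑a⁻¹ * t * ↑d⁻¹) * 0) = 1 := by
      rw [mul_zero, m3_zero, add_zero, Units.inv_mul _]
    have e2 : castT k ↑a⁻¹ * t + -(castT k ↑a⁻¹ * t * ↑d⁻¹) * ↑d = 0 := by
      have : (↑d⁻¹ : T) * ↑d = 1 := Units.inv_mul _
      calc castT k ↑a⁻¹ * t + -(castT k ↑a⁻¹ * t * ↑d⁻¹) * ↑d
          = castT k ↑a⁻¹ * t - castT k ↑a⁻¹ * t * (↑d⁻¹ * ↑d) := by ring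
        _ = 0 := by rw [this]; ring
    have e3 : (0 : T) * castT k ↑a + ↑d⁻¹ * 0 = 0 := by ring
    have e4 : (↑d⁻¹ : T) * ↑d = 1 := Units.inv_mul _
    rw [e1, e2, e3, e4, Mfun_id, ofAdd_toAdd]
  right_inv z := by
    simp only [toAdd_ofAdd, Mfun_comp k hk]
    have e1 : (↑a : R) * ↑a⁻¹ + m3 k (t * 0) = 1 := by
      rw [mul_zero, m3_zero, add_zero, Units.mul_inv _]
    have e2 : castT k ↑a * -(castT k ↑a⁻¹ * t * ↑d⁻¹) + t * ↑d⁻¹ = 0 := by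
      have h5 : castT k ↑a * castT k ↑a⁻¹ = 1 := by
        rw [← map_mul, Units.mul_inv _, map_one]
      calc castT k ↑a * -(castT k ↑a⁻¹ * t * ↑d⁻¹) + t * ↑d⁻¹
          = -(castT k ↑a * castT k ↑a⁻¹ * (t * ↑d⁻¹)) + t * ↑d⁻¹ := by ring
        _ = 0 := by rw [h5]; ring
    have e3 : (0 : T) * castT k ↑a⁻¹ + ↑d * 0 = 0 := by ring
    have e4 : (↑d : T) * ↑d⁻¹ = 1 := Units.mul_inv _
    rw [e1, e2, e3, e4, Mfun_id, ofAdd_toAdd]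
  map_mul' z w := by
    simp only [toAdd_mul, Mfun_add, ofAdd_add]

/-- the subfamily of automorphisms in the kernel. -/
def Mι (hk : 1 ≤ k) (t c : T) : MulAut G where
  toFun z := ofAdd (Mfun k (1 + m3 k t) 0 c 1 (toAdd z))
  invFun z := ofAdd (Mfun k (1 - m3 k t) 0 (-c) 1 (toAdd z))
  left_inv z := by
    simp only [toAdd_ofAdd, Mfun_comp k hk]
    have e1 : (1 - m3 k t) * (1 + m3 k t) + m3 k ((0:T) * c) = 1 := by
      have := m3_mul_m3 k hk t t
      calc (1 - m3 k t) * (1 + m3 k t) + m3 k ((0:T) * c)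
          = 1 - m3 k t * m3 k t + m3 k 0 := by rw [zero_mul]; ring
        _ = 1 := by rw [this, m3_zero]; ring
    have e2 : castT k (1 - m3 k t) * (0:T) + (0:T) * (1:T) = 0 := by ring
    have e3 : -c * castT k (1 + m3 k t) + (1:T) * c = 0 := by
      rw [map_add, map_one, castT_m3 k hk]
      ring
    have e4 : (1 : T) * 1 = 1 := by ring
    rw [e1, e2, e3, e4, Mfun_id, ofAdd_toAdd]
  right_inv z := by
    simp only [toAdd_ofAdd, Mfun_comp k hk]
    have e1 : (1 + m3 k t) * (1 - m3 k t) + m3 k ((0:T) * (-c)) = 1 := by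
      have := m3_mul_m3 k hk t t
      calc (1 + m3 k t) * (1 - m3 k t) + m3 k ((0:T) * (-c))
          = 1 - m3 k t * m3 k t + m3 k 0 := by rw [zero_mul]; ring
        _ = 1 := by rw [this, m3_zero]; ring
    have e2 : castT k (1 + m3 k t) * (0:T) + (0:T) * (1:T) = 0 := by ring
    have e3 : c * castT k (1 - m3 k t) + (1:T) * (-c) = 0 := by
      rw [map_sub, map_one, castT_m3 k hk]
      ring
    have e4 : (1 : T) * 1 = 1 := by ring
    rw [e1, e2, e3, e4, Mfun_id, ofAdd_toAdd]
  map_mul' z w := by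
    simp only [toAdd_mul, Mfun_add, ofAdd_add]


/-! ### Extraction of matrix entries from an automorphism -/

/-- `a`-entry. -/
def aR (α : MulAut G) : R := (toAdd (α (ofAdd ((1:R), (0:T))))).1
/-- `c`-entry. -/
def cT (α : MulAut G) : T := (toAdd (α (ofAdd ((1:R), (0:T))))).2
/-- `3^k·b`-entry. -/
def bp (α : MulAut G) : R := (toAdd (α (ofAdd ((0:R), (1:T))))).1
/-- `d`-entry. -/
def dT (α : MulAut G) : T := (toAdd (α (ofAdd ((0:R), (1:T))))).2
/-- `b`-entry. -/
def b3 (α : MulAut G) : T := div3 k (bp k α)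

lemma bp_torsion (α : MulAut G) : 3 • bp k α = 0 := by
  have h1 : (ofAdd ((0:R), (1:T)))^3 = 1 := by
    rw [← ofAdd_nsmul]
    have : (3 • ((0:R), (1:T))) = ((0:R), (0:T)) := by
      apply Prod.ext
      · simp
      · show (3 • (1 : T)) = 0
        decide
    rw [this]
    rfl
  have h2 : (α (ofAdd ((0:R), (1:T))))^3 = 1 := by rw [← map_pow, h1, map_one]
  have h3 : (3 : ℕ) • toAdd (α (ofAdd ((0:R), (1:T)))) = 0 := by
    rw [← toAdd_pow, h2]
    rfl
  calc 3 • bp k α = ((3:ℕ) • toAdd (α (ofAdd ((0:R), (1:T))))).1 := rfl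
    _ = 0 := by rw [h3]; rfl

lemma bp_eq (α : MulAut G) : bp k α = m3 k (b3 k α) :=
  (m3_div3 k _ (dvd_val_of_three_smul k _ (bp_torsion k α))).symm

lemma apply_eq (α : MulAut G) (x : R) (y : T) :
    toAdd (α (ofAdd (x, y)))
      = (x * aR k α + m3 k (b3 k α * y), castT k x * cT k α + dT k α * y) := by
  have hxy : ofAdd ((x, y) : R × T)
      = ofAdd ((1:R), (0:T)) ^ x.val * ofAdd ((0:R), (1:T)) ^ y.val := by
    rw [← ofAdd_nsmul, ← ofAdd_nsmul, ← ofAdd_add]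
    congr 1
    apply Prod.ext
    · show x = x.val • (1:R) + y.val • (0:R)
      rw [smul_zero, add_zero, nsmul_eq_mul, mul_one, ZMod.natCast_zmod_val]
    · show y = x.val • (0:T) + y.val • (1:T)
      rw [smul_zero, zero_add, nsmul_eq_mul, mul_one, ZMod.natCast_zmod_val]
  rw [hxy, map_mul, map_pow, map_pow, toAdd_mul, toAdd_pow, toAdd_pow]
  apply Prod.ext
  · show x.val • (toAdd (α (ofAdd ((1:R), (0:T))))).1
        + y.val • (toAdd (α (ofAdd ((0:R), (1:T))))).1 = _
    show x.val • aR k α + y.val • bp k α = _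
    rw [bp_eq, m3_nsmul, nsmul_eq_mul, ZMod.natCast_zmod_val, ZMod.natCast_zmod_val,
      mul_comm (y:T) (b3 k α)]
  · show x.val • (toAdd (α (ofAdd ((1:R), (0:T))))).2
        + y.val • (toAdd (α (ofAdd ((0:R), (1:T))))).2 = _
    show x.val • cT k α + y.val • dT k α = _
    rw [nsmul_eq_mul, nsmul_eq_mul, ZMod.natCast_zmod_val, castT_apply, mul_comm (y:T)]

/-- two automorphisms agreeing on the generators agree. -/
lemma aut_ext {α β : MulAut G} (h1 : aR k α = aR k β) (h2 : cT k α = cT k β)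
    (h3 : bp k α = bp k β) (h4 : dT k α = dT k β) : α = β := by
  apply MulEquiv.ext
  intro z
  have hb3 : b3 k α = b3 k β := by rw [b3, b3, h3]
  have := apply_eq k α (toAdd z).1 (toAdd z).2
  rw [h1, h2, hb3, h4, ← apply_eq k β] at this
  have hz : ofAdd ((toAdd z).1, (toAdd z).2) = z := by
    show ofAdd (toAdd z) = z
    simp
  rw [hz] at this
  exact (Multiplicative.toAdd.injective this)

lemma aR_mul (α β : MulAut G) :
    aR k (α * β) = aR k β * aR k α + m3 k (b3 k α * cT k β) := by
  show (toAdd (α (β (ofAdd ((1:R), (0:T)))))).1 = _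
  have hb : β (ofAdd ((1:R), (0:T))) = ofAdd (aR k β, cT k β) := rfl
  rw [hb, apply_eq]

lemma cT_mul (α β : MulAut G) :
    cT k (α * β) = castT k (aR k β) * cT k α + dT k α * cT k β := by
  show (toAdd (α (β (ofAdd ((1:R), (0:T)))))).2 = _
  have hb : β (ofAdd ((1:R), (0:T))) = ofAdd (aR k β, cT k β) := rfl
  rw [hb, apply_eq]

lemma bp_mul (α β : MulAut G) :
    bp k (α * β) = bp k β * aR k α + m3 k (b3 k α * dT k β) := by
  show (toAdd (α (β (ofAdd ((0:R), (1:T)))))).1 = _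
  have hb : β (ofAdd ((0:R), (1:T))) = ofAdd (bp k β, dT k β) := rfl
  rw [hb, apply_eq]

lemma dT_mul (hk : 1 ≤ k) (α β : MulAut G) :
    dT k (α * β) = dT k α * dT k β := by
  have h0 : dT k (α * β) = castT k (bp k β) * cT k α + dT k α * dT k β := by
    show (toAdd (α (β (ofAdd ((0:R), (1:T)))))).2 = _
    have hb : β (ofAdd ((0:R), (1:T))) = ofAdd (bp k β, dT k β) := rfl
    rw [hb, apply_eq]
  rw [h0, bp_eq, castT_m3 k hk, zero_mul, zero_add]

lemma b3_mul (hk : 1 ≤ k) (α β : MulAut G) :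
    b3 k (α * β) = castT k (aR k α) * b3 k β + b3 k α * dT k β := by
  have h0 : bp k (α * β) = m3 k (castT k (aR k α) * b3 k β + b3 k α * dT k β) := by
    rw [bp_mul, bp_eq, m3_mul, m3_add]
  rw [b3, h0, div3_m3]

lemma castS_aR_mul (α β : MulAut G) :
    castS k (aR k (α * β)) = castS k (aR k α) * castS k (aR k β) := by
  rw [aR_mul, map_add, map_mul, castS_m3, add_zero, mul_comm]

lemma castT_aR_mul (hk : 1 ≤ k) (α β : MulAut G) :
    castT k (aR k (α * β)) = castT k (aR k α) * castT k (aR k β) := by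
  rw [aR_mul, map_add, map_mul, castT_m3 k hk, add_zero, mul_comm]

lemma aR_one : aR k (1 : MulAut G) = 1 := rfl
lemma cT_one : cT k (1 : MulAut G) = 0 := rfl
lemma bp_one : bp k (1 : MulAut G) = 0 := rfl
lemma dT_one : dT k (1 : MulAut G) = 1 := rfl
lemma b3_one : b3 k (1 : MulAut G) = 0 := by
  rw [b3, bp_one]
  simp [div3]

lemma dT_isUnit (hk : 1 ≤ k) (α : MulAut G) : IsUnit (dT k α) := by
  apply IsUnit.of_mul_eq_one (dT k α⁻¹)
  rw [← dT_mul k hk, mul_inv_cancel, dT_one]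

lemma castS_aR_isUnit (α : MulAut G) : IsUnit (castS k (aR k α)) := by
  apply IsUnit.of_mul_eq_one (castS k (aR k α⁻¹))
  rw [← castS_aR_mul, mul_inv_cancel, aR_one, map_one]

lemma castT_aR_isUnit (hk : 1 ≤ k) (α : MulAut G) : IsUnit (castT k (aR k α)) := by
  apply IsUnit.of_mul_eq_one (castT k (aR k α⁻¹))
  rw [← castT_aR_mul k hk, mul_inv_cancel, aR_one, map_one]


/-! ### Entries of the builder automorphisms -/

lemma Msig_e1 (hk : 1 ≤ k) (a : (ZMod (3^(k+1)))ˣ) (t : T) (d : (ZMod 3)ˣ) :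
    toAdd ((Mσ k hk a t d) (ofAdd ((1:R), (0:T)))) = ((a : R), (0 : T)) := by
  show Mfun k (↑a) t 0 (↑d) ((1:R), (0:T)) = _
  unfold Mfun
  simp [m3_zero]

lemma Msig_e2 (hk : 1 ≤ k) (a : (ZMod (3^(k+1)))ˣ) (t : T) (d : (ZMod 3)ˣ) :
    toAdd ((Mσ k hk a t d) (ofAdd ((0:R), (1:T)))) = (m3 k t, (d : T)) := by
  show Mfun k (↑a) t 0 (↑d) ((0:R), (1:T)) = _
  unfold Mfun
  simp

lemma aR_Msig (hk : 1 ≤ k) (a : (ZMod (3^(k+1)))ˣ) (t : T) (d : (ZMod 3)ˣ) :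
    aR k (Mσ k hk a t d) = (a : R) := by rw [aR, Msig_e1]
lemma cT_Msig (hk : 1 ≤ k) (a : (ZMod (3^(k+1)))ˣ) (t : T) (d : (ZMod 3)ˣ) :
    cT k (Mσ k hk a t d) = 0 := by rw [cT, Msig_e1]
lemma bp_Msig (hk : 1 ≤ k) (a : (ZMod (3^(k+1)))ˣ) (t : T) (d : (ZMod 3)ˣ) :
    bp k (Mσ k hk a t d) = m3 k t := by rw [bp, Msig_e2]
lemma dT_Msig (hk : 1 ≤ k) (a : (ZMod (3^(k+1)))ˣ) (t : T) (d : (ZMod 3)ˣ) :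
    dT k (Mσ k hk a t d) = (d : T) := by rw [dT, Msig_e2]
lemma b3_Msig (hk : 1 ≤ k) (a : (ZMod (3^(k+1)))ˣ) (t : T) (d : (ZMod 3)ˣ) :
    b3 k (Mσ k hk a t d) = t := by rw [b3, bp_Msig, div3_m3]

lemma Mi_e1 (hk : 1 ≤ k) (t c : T) :
    toAdd ((Mι k hk t c) (ofAdd ((1:R), (0:T)))) = (1 + m3 k t, c) := by
  show Mfun k (1 + m3 k t) 0 c 1 ((1:R), (0:T)) = _
  unfold Mfun
  simp [m3_zero]

lemma Mi_e2 (hk : 1 ≤ k) (t c : T) :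
    toAdd ((Mι k hk t c) (ofAdd ((0:R), (1:T)))) = ((0:R), (1:T)) := by
  show Mfun k (1 + m3 k t) 0 c 1 ((0:R), (1:T)) = _
  unfold Mfun
  simp [m3_zero]

lemma aR_Mi (hk : 1 ≤ k) (t c : T) : aR k (Mι k hk t c) = 1 + m3 k t := by
  rw [aR, Mi_e1]
lemma cT_Mi (hk : 1 ≤ k) (t c : T) : cT k (Mι k hk t c) = c := by rw [cT, Mi_e1]
lemma bp_Mi (hk : 1 ≤ k) (t c : T) : bp k (Mι k hk t c) = 0 := by rw [bp, Mi_e2]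
lemma dT_Mi (hk : 1 ≤ k) (t c : T) : dT k (Mι k hk t c) = 1 := by rw [dT, Mi_e2]
lemma b3_Mi (hk : 1 ≤ k) (t c : T) : b3 k (Mι k hk t c) = 0 := by
  rw [b3, bp_Mi]
  simp [div3]

/-! ### The projection homomorphism -/

/-- unit given by the `d`-entry. -/
noncomputable def dUnit (hk : 1 ≤ k) (α : MulAut G) : (ZMod 3)ˣ := (dT_isUnit k hk α).unit
/-- unit given by the `a`-entry mod `3^k`. -/
noncomputable def aSUnit (α : MulAut G) : (ZMod (3^k))ˣ := (castS_aR_isUnit k α).unit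
/-- unit `ā·d`. -/
noncomputable def εUnit (hk : 1 ≤ k) (α : MulAut G) : (ZMod 3)ˣ :=
  ((castT_aR_isUnit k hk α).mul (dT_isUnit k hk α)).unit

lemma εUnit_val (hk : 1 ≤ k) (α : MulAut G) :
    (εUnit k hk α : T) = castT k (aR k α) * dT k α := IsUnit.unit_spec _
lemma aSUnit_val (α : MulAut G) :
    (aSUnit k α : S) = castS k (aR k α) := IsUnit.unit_spec _

lemma dT_sq (hk : 1 ≤ k) (α : MulAut G) : dT k α * dT k α = 1 :=
  unit_sq (dT k α) (dT_isUnit k hk α)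

/-- The projection homomorphism `Hol(C_{3^(k+1)} × C_3) →* Hol(C_3) × Hol(C_{3^k})`. -/
noncomputable def phi (hk : 1 ≤ k) :
    (SemidirectProduct G (MulAut G) (MonoidHom.id (MulAut G))) →*
      (Hol (Multiplicative (ZMod 3)) × Hol (Multiplicative (ZMod (3^k)))) where
  toFun p :=
    (⟨ofAdd (dT k p.right * b3 k p.right), unitToAut (εUnit k hk p.right)⟩,
     ⟨ofAdd (castS k ((toAdd p.left).1)), unitToAut (aSUnit k p.right)⟩)
  map_one' := by
    apply Prod.ext
    · apply SemidirectProduct.ext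
      · show ofAdd (dT k (1 : MulAut G) * b3 k (1 : MulAut G)) = 1
        rw [dT_one, b3_one, mul_zero]
        rfl
      · show unitToAut (εUnit k hk 1) = 1
        rw [unitToAut_congr (v := 1) (by
          rw [εUnit_val, aR_one, dT_one, map_one, mul_one, Units.val_one]),
          unitToAut_one]
    · apply SemidirectProduct.ext
      · show ofAdd (castS k ((toAdd (1 : G)).1)) = 1
        show ofAdd (castS k ((0 : R × T).1)) = 1
        rw [show ((0 : R × T)).1 = (0:R) from rfl, map_zero]
        rfl
      · show unitToAut (aSUnit k 1) = 1
        rw [unitToAut_congr (v := 1) (by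
          rw [aSUnit_val, aR_one, map_one, Units.val_one]),
          unitToAut_one]
  map_mul' p q := by
    have e1 : dT k (p.right * q.right) * b3 k (p.right * q.right)
        = (dT k p.right * b3 k p.right)
          + (castT k (aR k p.right) * dT k p.right) * (dT k q.right * b3 k q.right) := by
      rw [dT_mul k hk, b3_mul k hk]
      linear_combination (dT k p.right * b3 k p.right) * (dT_sq k hk q.right)
    have e2 : castS k ((toAdd (p * q).left).1)
        = castS k ((toAdd p.left).1) + castS k (aR k p.right) * castS k ((toAdd q.left).1) := by
      have h3 : (toAdd (p * q).left).1 = (toAdd p.left).1 + (toAdd ((p.right) q.left)).1 := rfl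
      have h2 : (toAdd ((p.right) q.left)).1
          = (toAdd q.left).1 * aR k p.right + m3 k (b3 k p.right * (toAdd q.left).2) := by
        conv_lhs => rw [show q.left = ofAdd (((toAdd q.left).1, (toAdd q.left).2)) from rfl]
        rw [apply_eq]
      rw [h3, h2, map_add, map_add, map_mul, castS_m3, add_zero]
      ring
    apply Prod.ext
    · apply SemidirectProduct.ext
      · show ofAdd (dT k (p.right * q.right) * b3 k (p.right * q.right))
          = ofAdd (dT k p.right * b3 k p.right) *
            (unitToAut (εUnit k hk p.right)) (ofAdd (dT k q.right * b3 k q.right))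
        rw [unitToAut_apply, toAdd_ofAdd, ← ofAdd_add, e1, εUnit_val]
      · show unitToAut (εUnit k hk (p.right * q.right))
          = unitToAut (εUnit k hk p.right) * unitToAut (εUnit k hk q.right)
        rw [← unitToAut_mul]
        apply unitToAut_congr
        rw [Units.val_mul, εUnit_val, εUnit_val, εUnit_val, dT_mul k hk, castT_aR_mul k hk]
        ring
    · apply SemidirectProduct.ext
      · show ofAdd (castS k ((toAdd (p * q).left).1))
          = ofAdd (castS k ((toAdd p.left).1)) *
            (unitToAut (aSUnit k p.right)) (ofAdd (castS k ((toAdd q.left).1)))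
        rw [unitToAut_apply, toAdd_ofAdd, ← ofAdd_add, e2, aSUnit_val]
      · show unitToAut (aSUnit k (p.right * q.right))
          = unitToAut (aSUnit k p.right) * unitToAut (aSUnit k q.right)
        rw [← unitToAut_mul]
        apply unitToAut_congr
        rw [Units.val_mul, aSUnit_val, aSUnit_val, aSUnit_val, castS_aR_mul]


lemma unitToAut_eq_one {m : ℕ} {u : (ZMod m)ˣ} (h : unitToAut u = 1) : (u : ZMod m) = 1 := by
  have := congrArg (fun (A : MulAut (Multiplicative (ZMod m))) => toAdd (A (ofAdd (1 : ZMod m)))) h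
  simpa using this

lemma phi_surjective (hk : 1 ≤ k) : Function.Surjective (phi k hk) := by
  rintro ⟨⟨g1, A1⟩, ⟨g2, A2⟩⟩
  obtain ⟨e, rfl⟩ := aut_eq_unitToAut A1
  obtain ⟨f, rfl⟩ := aut_eq_unitToAut A2
  obtain ⟨a, ha⟩ := ZMod.unitsMap_surjective (pow_dvd_pow 3 (Nat.le_succ k)) f
  have haT : IsUnit (castT k (a : R)) := a.isUnit.map (castT k)
  set d : (ZMod 3)ˣ := haT.unit * e with hd
  have hdval : (d : T) = castT k (a : R) * (e : T) := by
    rw [hd, Units.val_mul, IsUnit.unit_spec]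
  set t : T := (d : T) * toAdd g1 with ht
  have hdsq : (d : T) * (d : T) = 1 := unit_sq _ d.isUnit
  have haTsq : castT k (a : R) * castT k (a : R) = 1 := unit_sq _ haT
  refine ⟨⟨ofAdd (((toAdd g2).val : R), (0 : T)), Mσ k hk a t d⟩, ?_⟩
  apply Prod.ext
  · apply SemidirectProduct.ext
    · show ofAdd (dT k (Mσ k hk a t d) * b3 k (Mσ k hk a t d)) = g1
      rw [dT_Msig, b3_Msig, ht, ← mul_assoc, hdsq, one_mul, ofAdd_toAdd]
    · show unitToAut (εUnit k hk (Mσ k hk a t d)) = unitToAut e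
      apply unitToAut_congr
      rw [εUnit_val, aR_Msig, dT_Msig, hdval, ← mul_assoc, haTsq, one_mul]
  · apply SemidirectProduct.ext
    · show ofAdd (castS k (((toAdd (ofAdd (((toAdd g2).val : R), (0 : T)))).1))) = g2
      show ofAdd (castS k (((toAdd g2).val : R))) = g2
      rw [map_natCast, ZMod.natCast_zmod_val, ofAdd_toAdd]
    · show unitToAut (aSUnit k (Mσ k hk a t d)) = unitToAut f
      apply unitToAut_congr
      rw [aSUnit_val, aR_Msig]
      rw [← ha]
      rfl

/-! ### The elementary abelian kernel -/

/-- The embedding of `(C_3)^4` into the holomorph. -/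
def iota (hk : 1 ≤ k) : Multiplicative (Fin 4 → ZMod 3) →*
    SemidirectProduct G (MulAut G) (MonoidHom.id (MulAut G)) where
  toFun v := ⟨ofAdd (m3 k (toAdd v 0), toAdd v 1), Mι k hk (toAdd v 2) (toAdd v 3)⟩
  map_one' := by
    apply SemidirectProduct.ext
    · show ofAdd (m3 k 0, (0:T)) = 1
      rw [m3_zero]
      rfl
    · show Mι k hk 0 0 = 1
      apply aut_ext k
      · rw [aR_Mi, m3_zero, add_zero, aR_one]
      · rw [cT_Mi, cT_one]
      · rw [bp_Mi, bp_one]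
      · rw [dT_Mi, dT_one]
  map_mul' v w := by
    apply SemidirectProduct.ext
    · show ofAdd (m3 k (toAdd v 0 + toAdd w 0), toAdd v 1 + toAdd w 1)
        = ofAdd (m3 k (toAdd v 0), toAdd v 1) *
          (Mι k hk (toAdd v 2) (toAdd v 3)) (ofAdd (m3 k (toAdd w 0), toAdd w 1))
      have happ : toAdd ((Mι k hk (toAdd v 2) (toAdd v 3)) (ofAdd (m3 k (toAdd w 0), toAdd w 1)))
          = (m3 k (toAdd w 0), toAdd w 1) := by
        rw [apply_eq, aR_Mi, b3_Mi, dT_Mi]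
        apply Prod.ext
        · show m3 k (toAdd w 0) * (1 + m3 k (toAdd v 2)) + m3 k (0 * toAdd w 1) = m3 k (toAdd w 0)
          rw [mul_add, mul_one, m3_mul_m3 k hk, zero_mul, m3_zero, add_zero, add_zero]
        · show castT k (m3 k (toAdd w 0)) * cT k (Mι k hk (toAdd v 2) (toAdd v 3))
              + 1 * toAdd w 1 = toAdd w 1
          rw [castT_m3 k hk, zero_mul, zero_add, one_mul]
      calc ofAdd (m3 k (toAdd v 0 + toAdd w 0), toAdd v 1 + toAdd w 1)
          = ofAdd ((m3 k (toAdd v 0), toAdd v 1) + (m3 k (toAdd w 0), toAdd w 1)) := by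
            rw [Prod.mk_add_mk, m3_add]
        _ = _ := by
            rw [ofAdd_add]
            congr 1
            exact (congrArg ofAdd happ.symm).trans (ofAdd_toAdd _)
    · show Mι k hk (toAdd v 2 + toAdd w 2) (toAdd v 3 + toAdd w 3)
        = Mι k hk (toAdd v 2) (toAdd v 3) * Mι k hk (toAdd w 2) (toAdd w 3)
      apply aut_ext k
      · rw [aR_mul, aR_Mi, aR_Mi, aR_Mi, b3_Mi, cT_Mi, zero_mul, m3_zero, add_zero, m3_add]
        rw [add_mul, mul_add, mul_add, one_mul, mul_one, m3_mul_m3 k hk]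
        ring
      · rw [cT_mul, cT_Mi, cT_Mi, cT_Mi, dT_Mi, aR_Mi, map_add, map_one, castT_m3 k hk]
        ring
      · rw [bp_mul, bp_Mi, bp_Mi, b3_Mi, dT_Mi, zero_mul, mul_one, m3_zero, add_zero]
      · rw [dT_mul k hk, dT_Mi, dT_Mi, dT_Mi, one_mul]

lemma iota_injective (hk : 1 ≤ k) : Function.Injective (iota k hk) := by
  rw [injective_iff_map_eq_one]
  intro v hv
  have hL : (m3 k (toAdd v 0), toAdd v 1) = ((0:R), (0:T)) :=
    congrArg (fun q => toAdd (SemidirectProduct.left q)) hv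
  have h0 : toAdd v 0 = 0 := by
    have := congrArg (div3 k) (congrArg Prod.fst hL)
    rwa [div3_m3, show div3 k (((0:R),(0:T)).1) = 0 by simp [div3]] at this
  have h1 : toAdd v 1 = 0 := congrArg Prod.snd hL
  have h2 : toAdd v 2 = 0 := by
    have haR : aR k (Mι k hk (toAdd v 2) (toAdd v 3)) = aR k (1 : MulAut G) :=
      congrArg (fun q => aR k (SemidirectProduct.right q)) hv
    rw [aR_Mi, aR_one] at haR
    have : m3 k (toAdd v 2) = 0 := by
      have := congrArg (fun x => x - 1) haR
      simpa using this
    have := congrArg (div3 k) this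
    rwa [div3_m3, show div3 k (0:R) = 0 by simp [div3]] at this
  have h3 : toAdd v 3 = 0 := by
    have hcT : cT k (Mι k hk (toAdd v 2) (toAdd v 3)) = cT k (1 : MulAut G) :=
      congrArg (fun q => cT k (SemidirectProduct.right q)) hv
    rwa [cT_Mi, cT_one] at hcT
  show v = 1
  have : toAdd v = 0 := by
    funext i
    fin_cases i <;> assumption
  have := congrArg ofAdd this
  simpa using this

lemma range_eq_ker (hk : 1 ≤ k) : (iota k hk).range = (phi k hk).ker := by
  ext p
  constructor
  · rintro ⟨v, rfl⟩
    rw [MonoidHom.mem_ker]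
    apply Prod.ext
    · apply SemidirectProduct.ext
      · show ofAdd (dT k (Mι k hk (toAdd v 2) (toAdd v 3)) *
            b3 k (Mι k hk (toAdd v 2) (toAdd v 3))) = 1
        rw [dT_Mi, b3_Mi, mul_zero]
        rfl
      · show unitToAut (εUnit k hk (Mι k hk (toAdd v 2) (toAdd v 3))) = 1
        rw [unitToAut_congr (v := 1) (by
          rw [εUnit_val, aR_Mi, dT_Mi, mul_one, map_add, map_one, castT_m3 k hk,
            add_zero, Units.val_one]), unitToAut_one]
    · apply SemidirectProduct.ext
      · show ofAdd (castS k (m3 k (toAdd v 0))) = 1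
        rw [castS_m3]
        rfl
      · show unitToAut (aSUnit k (Mι k hk (toAdd v 2) (toAdd v 3))) = 1
        rw [unitToAut_congr (v := 1) (by
          rw [aSUnit_val, aR_Mi, map_add, map_one, castS_m3, add_zero, Units.val_one]),
          unitToAut_one]
  · intro hp
    rw [MonoidHom.mem_ker] at hp
    have h1 : ofAdd (dT k p.right * b3 k p.right) = 1 :=
      congrArg (fun q => q.1.left) hp
    have h2 : unitToAut (εUnit k hk p.right) = 1 :=
      congrArg (fun q => q.1.right) hp
    have h3 : ofAdd (castS k ((toAdd p.left).1)) = 1 :=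
      congrArg (fun q => q.2.left) hp
    have h4 : unitToAut (aSUnit k p.right) = 1 :=
      congrArg (fun q => q.2.right) hp
    have hcastS : castS k (aR k p.right) = 1 := by
      have := unitToAut_eq_one h4
      rwa [aSUnit_val] at this
    have hcastT : castT k (aR k p.right) = 1 := castT_eq_one k _ hk hcastS
    have hdT : dT k p.right = 1 := by
      have := unitToAut_eq_one h2
      rw [εUnit_val, hcastT, one_mul] at this
      exact this
    have hb3 : b3 k p.right = 0 := by
      have : dT k p.right * b3 k p.right = 0 := by
        have := congrArg toAdd h1
        simpa using this
      rwa [hdT, one_mul] at this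
    have hbp : bp k p.right = 0 := by rw [bp_eq, hb3, m3_zero]
    have hx : castS k ((toAdd p.left).1) = 0 := by
      have := congrArg toAdd h3
      simpa using this
    have hxdvd : 3^k ∣ ((toAdd p.left).1).val := by
      rw [castS_apply] at hx
      rwa [ZMod.natCast_eq_zero_iff] at hx
    have hxm3 : m3 k (div3 k ((toAdd p.left).1)) = (toAdd p.left).1 := m3_div3 k _ hxdvd
    have hadvd : 3^k ∣ (aR k p.right - 1).val := by
      have : castS k (aR k p.right - 1) = 0 := by rw [map_sub, hcastS, map_one, sub_self]
      rw [castS_apply] at this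
      rwa [ZMod.natCast_eq_zero_iff] at this
    have ham3 : m3 k (div3 k (aR k p.right - 1)) = aR k p.right - 1 := m3_div3 k _ hadvd
    refine ⟨ofAdd ![div3 k ((toAdd p.left).1), (toAdd p.left).2,
      div3 k (aR k p.right - 1), cT k p.right], ?_⟩
    apply SemidirectProduct.ext
    · show ofAdd (m3 k (div3 k ((toAdd p.left).1)), (toAdd p.left).2) = p.left
      rw [hxm3]
      show ofAdd (toAdd p.left) = p.left
      simp
    · show Mι k hk (div3 k (aR k p.right - 1)) (cT k p.right) = p.right
      apply aut_ext k
      · rw [aR_Mi, ham3]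
        ring
      · rw [cT_Mi]
      · rw [bp_Mi, hbp]
      · rw [dT_Mi, hdT]

end Arith

theorem main (k : ℕ) (hk : 1 ≤ k) :
    ∃ (N : Subgroup (Hol (Multiplicative (ZMod (3 ^ (k+1)) × ZMod 3)))) (hN : N.Normal),
      Nonempty (N ≃* Multiplicative (Fin 4 → ZMod 3)) ∧
      Nonempty (letI := hN;
        (Hol (Multiplicative (ZMod (3 ^ (k+1)) × ZMod 3)) ⧸ N) ≃*
          Hol (Multiplicative (ZMod 3)) × Hol (Multiplicative (ZMod (3 ^ k)))) := by
  refine ⟨(phi k hk).ker, MonoidHom.normal_ker _, ⟨?_⟩, ⟨?_⟩⟩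
  · exact ((MonoidHom.ofInjective (iota_injective k hk)).trans
      (MulEquiv.subgroupCongr (range_eq_ker k hk))).symm
  · exact QuotientGroup.quotientKerEquivOfSurjective _ (phi_surjective k hk)

end HolAux

/-- For `n ≥ 2`, the holomorph `Hol(C_{3^n} × C_3)` has a normal subgroup `N` isomorphic
to the elementary abelian group `(C_3)^4` such that the quotient is isomorphic to
`Hol(C_3) × Hol(C_{3^(n-1)})`. -/
theorem hol_zmod_three_pow_mul_three_structure (n : ℕ) (hn : 2 ≤ n) :
    ∃ (N : Subgroup (Hol (Multiplicative (ZMod (3 ^ n) × ZMod 3)))) (hN : N.Normal),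
      Nonempty (N ≃* Multiplicative (Fin 4 → ZMod 3)) ∧
      Nonempty (letI := hN;
        (Hol (Multiplicative (ZMod (3 ^ n) × ZMod 3)) ⧸ N) ≃*
          Hol (Multiplicative (ZMod 3)) × Hol (Multiplicative (ZMod (3 ^ (n - 1))))) := by
  obtain ⟨k, hk, rfl⟩ : ∃ k, 1 ≤ k ∧ n = k + 1 := ⟨n - 1, by omega, by omega⟩
  have h1 : k + 1 - 1 = k := by omega
  rw [h1]
  exact HolAux.main k hk
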